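/- For every natural number n ≥ 3, T(n², 3) ≤ T(n, 3) + 4. -/

import Mathlib

/-- The outcome of a cascaded test `t` (a list of items) on a defective set `S`:
the first element of `t` belonging to `S`, or `none` if there is none. -/
def outcome {N : ℕ} (t : List (Fin N)) (S : Finset (Fin N)) : Option (Fin N) :=
  (t.filter (fun x => x ∈ S)).head?

/-- A testing design `𝒯` (an indexed family of tests) is feasible for `(N, K)` if the
map sending each `S ⊆ Fin N` with `|S| ≤ K` to its vector of test outcomes is injective
on `{S | |S| ≤ K}`. -/
def Feasible (N K : ℕ) {T : ℕ} (𝒯 : Fin T → List (Fin N)) : Prop :=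
  Set.InjOn (fun (S : Finset (Fin N)) => fun i : Fin T => outcome (𝒯 i) S)
    {S : Finset (Fin N) | S.card ≤ K}

/-- `TNK N K`: the minimum number of tests over all duplicate-free testing designs
feasible for `(N, K)`. -/
noncomputable def TNK (N K : ℕ) : ℕ :=
  sInf {T : ℕ | ∃ 𝒯 : Fin T → List (Fin N), (∀ i, (𝒯 i).Nodup) ∧ Feasible N K 𝒯}

/-- `fT 𝒯 S v`: the number of tests in the design `𝒯` whose outcome on `S` is `some v`. -/
def fT {N T : ℕ} (𝒯 : Fin T → List (Fin N)) (S : Finset (Fin N)) (v : Fin N) : ℕ :=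
  (Finset.univ.filter (fun i : Fin T => outcome (𝒯 i) S = some v)).card

/-- A design is in systematic form if every test is nonempty and the first element of
each test does not occur in any other test. -/
def Systematic {N T : ℕ} (𝒯 : Fin T → List (Fin N)) : Prop :=
  ∀ i : Fin T, 𝒯 i ≠ [] ∧ ∀ u : Fin N, (𝒯 i).head? = some u → ∀ j : Fin T, j ≠ i → u ∉ 𝒯 j

namespace GT

lemma outcome_eq_none_iff {N : ℕ} (l : List (Fin N)) (S : Finset (Fin N)) :
    outcome l S = none ↔ ∀ x ∈ l, x ∉ S := by
  simp [outcome, List.head?_eq_none_iff, List.filter_eq_nil_iff]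

lemma outcome_eq_some {N : ℕ} {l : List (Fin N)} {S : Finset (Fin N)} {x : Fin N}
    (h : outcome l S = some x) :
    x ∈ l ∧ x ∈ S ∧ ∀ y ∈ l, y ∈ S → l.idxOf x ≤ l.idxOf y := by
  induction l with
  | nil => simp [outcome] at h
  | cons a l ih =>
    by_cases ha : a ∈ S
    · have h' : outcome (a :: l) S = some a := by
        simp [outcome, List.filter_cons, ha]
      rw [h'] at h
      obtain rfl : a = x := by injection h
      refine ⟨List.mem_cons_self, ha, ?_⟩
      intro y hy hyS
      simp [List.idxOf_cons_self]
    · have h' : outcome (a :: l) S = outcome l S := by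
        simp [outcome, List.filter_cons, ha]
      rw [h'] at h
      obtain ⟨h1, h2, h3⟩ := ih h
      have hxa : x ≠ a := fun e => ha (e ▸ h2)
      refine ⟨List.mem_cons_of_mem _ h1, h2, ?_⟩
      intro y hy hyS
      have hya : y ≠ a := fun e => ha (e ▸ hyS)
      rw [List.idxOf_cons_ne _ (Ne.symm hxa), List.idxOf_cons_ne _ (Ne.symm hya)]
      have hy' : y ∈ l := by
        rcases List.mem_cons.1 hy with h | h
        · exact absurd h hya
        · exact h
      exact Nat.succ_le_succ (h3 y hy' hyS)

lemma outcome_eq_some_of {N : ℕ} {l : List (Fin N)} {S : Finset (Fin N)} {x : Fin N}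
    (hxl : x ∈ l) (hxS : x ∈ S)
    (hmin : ∀ y ∈ l, y ∈ S → l.idxOf x ≤ l.idxOf y) :
    outcome l S = some x := by
  induction l with
  | nil => cases hxl
  | cons a l ih =>
    by_cases ha : a ∈ S
    · have hxa : x = a := by
        by_contra hne
        have h0 := hmin a (List.mem_cons_self) ha
        rw [List.idxOf_cons_self, List.idxOf_cons_ne _ (Ne.symm hne)] at h0
        omega
      subst hxa
      simp [outcome, List.filter_cons, ha]
    · have hxa : x ≠ a := fun e => ha (e ▸ hxS)
      have hxl' : x ∈ l := by
        rcases List.mem_cons.1 hxl with h | h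
        · exact absurd h hxa
        · exact h
      have h' : outcome (a :: l) S = outcome l S := by
        simp [outcome, List.filter_cons, ha]
      rw [h']
      apply ih hxl'
      intro y hy hyS
      have hya : y ≠ a := fun e => ha (e ▸ hyS)
      have := hmin y (List.mem_cons_of_mem _ hy) hyS
      rw [List.idxOf_cons_ne _ (Ne.symm hxa), List.idxOf_cons_ne _ (Ne.symm hya)] at this
      omega

def testOf {N : ℕ} (κ : Fin N → ℕ) (P : Fin N → Bool) : List (Fin N) :=
  List.insertionSort (fun x y => κ x ≤ κ y) ((List.finRange N).filter P)

lemma mem_testOf {N : ℕ} {κ : Fin N → ℕ} {P : Fin N → Bool} {x : Fin N} :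
    x ∈ testOf κ P ↔ P x = true := by
  unfold testOf
  rw [(List.perm_insertionSort _ _).mem_iff]
  simp [List.mem_filter]

lemma nodup_testOf {N : ℕ} (κ : Fin N → ℕ) (P : Fin N → Bool) : (testOf κ P).Nodup := by
  unfold testOf
  exact ((List.perm_insertionSort _ _).nodup_iff).2 ((List.nodup_finRange N).filter _)

lemma sorted_testOf {N : ℕ} (κ : Fin N → ℕ) (P : Fin N → Bool) :
    (testOf κ P).Pairwise (fun x y => κ x ≤ κ y) := by
  haveI : IsTotal (Fin N) (fun x y => κ x ≤ κ y) := ⟨fun a b => Nat.le_total _ _⟩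
  haveI : IsTrans (Fin N) (fun x y => κ x ≤ κ y) := ⟨fun a b c => Nat.le_trans⟩
  exact List.pairwise_insertionSort _ _

lemma testOf_out_none {N : ℕ} {κ : Fin N → ℕ} {P : Fin N → Bool} (S : Finset (Fin N)) :
    outcome (testOf κ P) S = none ↔ ∀ x ∈ S, ¬ P x = true := by
  rw [outcome_eq_none_iff]
  constructor
  · intro h x hx hP
    exact h x (mem_testOf.2 hP) hx
  · intro h x hl hx
    exact h x hx (mem_testOf.1 hl)

lemma testOf_out_some {N : ℕ} {κ : Fin N → ℕ} {P : Fin N → Bool} {S : Finset (Fin N)} {x : Fin N}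
    (h : outcome (testOf κ P) S = some x) :
    x ∈ S ∧ P x = true ∧ ∀ y ∈ S, P y = true → κ x ≤ κ y := by
  have hs := sorted_testOf κ P
  have hfs : (List.filter (fun y => decide (y ∈ S)) (testOf κ P)).Pairwise (fun x y => κ x ≤ κ y) :=
    List.Pairwise.filter _ hs
  rw [outcome] at h
  obtain ⟨rest, hfl⟩ : ∃ rest, List.filter (fun y => decide (y ∈ S)) (testOf κ P) = x :: rest := by
    cases hfl : List.filter (fun y => decide (y ∈ S)) (testOf κ P) with
    | nil => rw [hfl] at h; simp at h
    | cons z rest =>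
      rw [hfl] at h
      simp only [List.head?_cons, Option.some.injEq] at h
      exact ⟨rest, by rw [h]⟩
  have hxmem : x ∈ List.filter (fun y => decide (y ∈ S)) (testOf κ P) := by
    rw [hfl]; exact List.mem_cons_self
  have hx1 := List.mem_filter.1 hxmem
  refine ⟨by simpa using hx1.2, mem_testOf.1 hx1.1, ?_⟩
  intro y hyS hPy
  have hymem : y ∈ List.filter (fun y => decide (y ∈ S)) (testOf κ P) :=
    List.mem_filter.2 ⟨mem_testOf.2 hPy, by simpa using hyS⟩
  rw [hfl] at hymem
  rcases List.mem_cons.1 hymem with h' | h'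
  · subst h'; exact le_refl _
  · rw [hfl] at hfs
    exact List.rel_of_pairwise_cons hfs h'

lemma testOf_out_eq_some {N : ℕ} {κ : Fin N → ℕ} {P : Fin N → Bool} (hinj : Function.Injective κ)
    {S : Finset (Fin N)} {x : Fin N}
    (hP : P x = true) (hxS : x ∈ S) (hmin : ∀ y ∈ S, P y = true → κ x ≤ κ y) :
    outcome (testOf κ P) S = some x := by
  cases h : outcome (testOf κ P) S with
  | none => exact absurd hP (((testOf_out_none S).1 h) x hxS)
  | some z =>
    obtain ⟨hz1, hz2, hz3⟩ := testOf_out_some h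
    have : κ z = κ x := le_antisymm (hz3 x hxS hP) (hmin z hz1 hz2)
    rw [hinj this]

lemma digit_lt {B q q' p p' : ℕ} (hp : p < p') (hq : q < B) : p * B + q < p' * B + q' := by
  have h1 : p * B + q < (p + 1) * B := by nlinarith
  have h2 : (p + 1) * B ≤ p' * B := Nat.mul_le_mul_right _ hp
  omega


def rowF (n : ℕ) (x : Fin (n ^ 2)) : Fin n :=
  ⟨x.val / n, by
    have hx := x.isLt
    rcases Nat.eq_zero_or_pos n with h | h
    · subst h; simp at hx
    · rw [Nat.div_lt_iff_lt_mul h]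
      exact hx.trans_le (le_of_eq (pow_two n))⟩

def colF (n : ℕ) (x : Fin (n ^ 2)) : Fin n :=
  ⟨x.val % n, by
    have hx := x.isLt
    rcases Nat.eq_zero_or_pos n with h | h
    · subst h; simp at hx
    · exact Nat.mod_lt _ h⟩

lemma rowF_mul_add_colF (n : ℕ) (x : Fin (n ^ 2)) :
    (rowF n x).val * n + (colF n x).val = x.val := by
  show x.val / n * n + x.val % n = x.val
  rw [mul_comm]
  exact Nat.div_add_mod _ _

lemma rowF_le_rowF {n : ℕ} {x y : Fin (n ^ 2)} (h : x.val ≤ y.val) :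
    (rowF n x).val ≤ (rowF n y).val :=
  Nat.div_le_div_right h

def keyL (n : ℕ) (t : List (Fin n)) (x : Fin (n ^ 2)) : ℕ :=
  (t.idxOf (rowF n x) * (t.length + 1) + t.idxOf (colF n x)) * n ^ 2 + x.val

lemma keyL_inj (n : ℕ) (t : List (Fin n)) : Function.Injective (keyL n t) := by
  intro x y h
  have hx : keyL n t x % n ^ 2 = x.val := by
    unfold keyL
    rw [mul_comm _ (n ^ 2), Nat.mul_add_mod]
    exact Nat.mod_eq_of_lt x.isLt
  have hy : keyL n t y % n ^ 2 = y.val := by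
    unfold keyL
    rw [mul_comm _ (n ^ 2), Nat.mul_add_mod]
    exact Nat.mod_eq_of_lt y.isLt
  apply Fin.ext
  rw [← hx, ← hy, h]

def DL (n : ℕ) (t : List (Fin n)) : Fin (n ^ 2) → Bool :=
  fun x => decide (rowF n x ∈ t ∨ colF n x ∈ t)

def liftT (n : ℕ) (t : List (Fin n)) : List (Fin (n ^ 2)) := testOf (keyL n t) (DL n t)

lemma DL_true_iff {n : ℕ} {t : List (Fin n)} {x : Fin (n ^ 2)} :
    DL n t x = true ↔ (rowF n x ∈ t ∨ colF n x ∈ t) := by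
  simp [DL]

/-- key inequality: if the row of `y` comes strictly earlier in `t` than the row of `x`,
then `keyL y < keyL x`. -/
lemma keyL_lt_of_row {n : ℕ} {t : List (Fin n)} {x y : Fin (n ^ 2)}
    (h : t.idxOf (rowF n y) < t.idxOf (rowF n x)) : keyL n t y < keyL n t x := by
  unfold keyL
  apply digit_lt _ y.isLt
  apply digit_lt h
  have := List.idxOf_le_length (a := colF n y) (l := t)
  omega

lemma keyL_lt_of_col {n : ℕ} {t : List (Fin n)} {x y : Fin (n ^ 2)}
    (hrow : rowF n y = rowF n x)
    (h : t.idxOf (colF n y) < t.idxOf (colF n x)) : keyL n t y < keyL n t x := by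
  unfold keyL
  rw [hrow]
  apply digit_lt _ y.isLt
  omega

/-- Simulation of the row design: the outcome of test `t` on the row set of `S`
can be computed from the outcome of the lifted test on `S`. -/
lemma simRow {n : ℕ} (t : List (Fin n)) (S : Finset (Fin (n ^ 2))) :
    outcome t (S.image (rowF n)) =
      (outcome (liftT n t) S).bind
        (fun x => if rowF n x ∈ t then some (rowF n x) else none) := by
  cases h : outcome (liftT n t) S with
  | none =>
    rw [Option.bind_none, outcome_eq_none_iff]
    intro r hrt hrS
    obtain ⟨y, hyS, rfl⟩ := Finset.mem_image.1 hrS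
    exact ((testOf_out_none S).1 h) y hyS (DL_true_iff.2 (Or.inl hrt))
  | some x =>
    obtain ⟨hxS, hPx, hmin⟩ := testOf_out_some h
    by_cases hrt : rowF n x ∈ t
    · rw [Option.bind_some, if_pos hrt]
      apply outcome_eq_some_of hrt (Finset.mem_image.2 ⟨x, hxS, rfl⟩)
      intro r' hr't hr'S
      obtain ⟨y, hyS, rfl⟩ := Finset.mem_image.1 hr'S
      by_contra hlt
      push_neg at hlt
      exact absurd (hmin y hyS (DL_true_iff.2 (Or.inl hr't)))
        (Nat.not_le.2 (keyL_lt_of_row hlt))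
    · rw [Option.bind_some, if_neg hrt, outcome_eq_none_iff]
      intro r hrt' hrS
      obtain ⟨y, hyS, rfl⟩ := Finset.mem_image.1 hrS
      have hxlen : t.idxOf (rowF n x) = t.length := List.idxOf_eq_length hrt
      have hylen : t.idxOf (rowF n y) < t.length := List.idxOf_lt_length_iff.2 hrt'
      exact absurd (hmin y hyS (DL_true_iff.2 (Or.inl hrt')))
        (Nat.not_le.2 (keyL_lt_of_row (by omega)))

/-- Simulation of the column design when all elements of `S` lie in a single row. -/
lemma simCol {n : ℕ} (t : List (Fin n)) (S : Finset (Fin (n ^ 2))) (r₀ : Fin n)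
    (hall : ∀ y ∈ S, rowF n y = r₀) :
    outcome t (S.image (colF n)) =
      (outcome (liftT n t) S).bind
        (fun x => if colF n x ∈ t then some (colF n x) else none) := by
  cases h : outcome (liftT n t) S with
  | none =>
    rw [Option.bind_none, outcome_eq_none_iff]
    intro c hct hcS
    obtain ⟨y, hyS, rfl⟩ := Finset.mem_image.1 hcS
    exact ((testOf_out_none S).1 h) y hyS (DL_true_iff.2 (Or.inr hct))
  | some x =>
    obtain ⟨hxS, hPx, hmin⟩ := testOf_out_some h
    by_cases hct : colF n x ∈ t
    · rw [Option.bind_some, if_pos hct]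
      apply outcome_eq_some_of hct (Finset.mem_image.2 ⟨x, hxS, rfl⟩)
      intro c' hc't hc'S
      obtain ⟨y, hyS, rfl⟩ := Finset.mem_image.1 hc'S
      by_contra hlt
      push_neg at hlt
      have hrow : rowF n y = rowF n x := by rw [hall y hyS, hall x hxS]
      exact absurd (hmin y hyS (DL_true_iff.2 (Or.inr hc't)))
        (Nat.not_le.2 (keyL_lt_of_col hrow hlt))
    · rw [Option.bind_some, if_neg hct, outcome_eq_none_iff]
      intro c hct' hcS
      obtain ⟨y, hyS, rfl⟩ := Finset.mem_image.1 hcS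
      have hxlen : t.idxOf (colF n x) = t.length := List.idxOf_eq_length hct
      have hylen : t.idxOf (colF n y) < t.length := List.idxOf_lt_length_iff.2 hct'
      have hrow : rowF n y = rowF n x := by rw [hall y hyS, hall x hxS]
      exact absurd (hmin y hyS (DL_true_iff.2 (Or.inr hct')))
        (Nat.not_le.2 (keyL_lt_of_col hrow (by omega)))


def kA (n : ℕ) (x : Fin (n ^ 2)) : ℕ := x.val
def kB (n : ℕ) (x : Fin (n ^ 2)) : ℕ := n ^ 2 - 1 - x.val
def kE (n : ℕ) (x : Fin (n ^ 2)) : ℕ := (rowF n x).val * n + (n - 1 - (colF n x).val)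
def kF (n : ℕ) (x : Fin (n ^ 2)) : ℕ := (n - 1 - (rowF n x).val) * n + (colF n x).val

def tA (n : ℕ) : List (Fin (n ^ 2)) := testOf (kA n) (fun _ => true)
def tB (n : ℕ) : List (Fin (n ^ 2)) := testOf (kB n) (fun _ => true)
def tE (n : ℕ) : List (Fin (n ^ 2)) := testOf (kE n) (fun _ => true)
def tF (n : ℕ) : List (Fin (n ^ 2)) := testOf (kF n) (fun _ => true)

lemma kA_inj (n : ℕ) : Function.Injective (kA n) := fun x y h => Fin.ext h

lemma kB_inj (n : ℕ) : Function.Injective (kB n) := by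
  intro x y h
  have hx := x.isLt
  have hy := y.isLt
  simp only [kB] at h
  exact Fin.ext (by omega)

lemma kE_inj (n : ℕ) (hn0 : 0 < n) : Function.Injective (kE n) := by
  intro x y h
  have ex := rowF_mul_add_colF n x
  have ey := rowF_mul_add_colF n y
  have hcx := (colF n x).isLt
  have hcy := (colF n y).isLt
  simp only [kE] at h
  have hrow : (rowF n x).val = (rowF n y).val := by
    by_contra hne
    rcases Nat.lt_or_ge (rowF n x).val (rowF n y).val with hlt | hge
    · exact absurd h (Nat.ne_of_lt (digit_lt hlt (by omega)))
    · have hlt : (rowF n y).val < (rowF n x).val := by omega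
      exact absurd h.symm (Nat.ne_of_lt (digit_lt hlt (by omega)))
  have hprod : (rowF n x).val * n = (rowF n y).val * n := by rw [hrow]
  exact Fin.ext (by omega)

lemma kF_inj (n : ℕ) (hn0 : 0 < n) : Function.Injective (kF n) := by
  intro x y h
  have ex := rowF_mul_add_colF n x
  have ey := rowF_mul_add_colF n y
  have hcx := (colF n x).isLt
  have hcy := (colF n y).isLt
  have hrx := (rowF n x).isLt
  have hry := (rowF n y).isLt
  simp only [kF] at h
  have hrow : n - 1 - (rowF n x).val = n - 1 - (rowF n y).val := by
    by_contra hne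
    rcases Nat.lt_or_ge (n - 1 - (rowF n x).val) (n - 1 - (rowF n y).val) with hlt | hge
    · exact absurd h (Nat.ne_of_lt (digit_lt hlt (by omega)))
    · have hlt : n - 1 - (rowF n y).val < n - 1 - (rowF n x).val := by omega
      exact absurd h.symm (Nat.ne_of_lt (digit_lt hlt (by omega)))
  have hrow' : (rowF n x).val = (rowF n y).val := by omega
  have hprod : (rowF n x).val * n = (rowF n y).val * n := by rw [hrow']
  have hprod2 : (n - 1 - (rowF n x).val) * n = (n - 1 - (rowF n y).val) * n := by rw [hrow]
  exact Fin.ext (by omega)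

lemma key_subset (n : ℕ) (hn : 3 ≤ n) {T₀ : ℕ} (𝒯 : Fin T₀ → List (Fin n))
    (hfeas : Feasible n 3 𝒯)
    (S S' : Finset (Fin (n ^ 2))) (hS : S.card ≤ 3) (hS' : S'.card ≤ 3)
    (hA : outcome (tA n) S = outcome (tA n) S')
    (hB : outcome (tB n) S = outcome (tB n) S')
    (hE : outcome (tE n) S = outcome (tE n) S')
    (hF : outcome (tF n) S = outcome (tF n) S')
    (hL : ∀ j, outcome (liftT n (𝒯 j)) S = outcome (liftT n (𝒯 j)) S') :
    S ⊆ S' := by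
  intro x hx
  have hn0 : 0 < n := by omega
  -- the minimum element a
  obtain ⟨a, ha⟩ : ∃ a, outcome (tA n) S = some a := by
    cases h : outcome (tA n) S with
    | none => exact absurd (((testOf_out_none S).1 h) x hx) (by simp)
    | some a => exact ⟨a, rfl⟩
  obtain ⟨haS, -, hamin⟩ := testOf_out_some ha
  have ha' : outcome (tA n) S' = some a := by rw [← hA]; exact ha
  obtain ⟨haS', -, hamin'⟩ := testOf_out_some ha'
  -- the maximum element b
  obtain ⟨b, hb⟩ : ∃ b, outcome (tB n) S = some b := by
    cases h : outcome (tB n) S with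
    | none => exact absurd (((testOf_out_none S).1 h) x hx) (by simp)
    | some b => exact ⟨b, rfl⟩
  obtain ⟨hbS, -, hbmax⟩ := testOf_out_some hb
  have hb' : outcome (tB n) S' = some b := by rw [← hB]; exact hb
  obtain ⟨hbS', -, hbmax'⟩ := testOf_out_some hb'
  -- decoded min/max facts
  have haminv : ∀ y ∈ S, a.val ≤ y.val := fun y hy => hamin y hy rfl
  have haminv' : ∀ y ∈ S', a.val ≤ y.val := fun y hy => hamin' y hy rfl
  have hbmaxv : ∀ y ∈ S, y.val ≤ b.val := by
    intro y hy
    have h1 := hbmax y hy rfl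
    have := y.isLt; have := b.isLt
    simp only [kB] at h1; omega
  have hbmaxv' : ∀ y ∈ S', y.val ≤ b.val := by
    intro y hy
    have h1 := hbmax' y hy rfl
    have := y.isLt; have := b.isLt
    simp only [kB] at h1; omega
  by_cases hxa : x = a
  · subst hxa; exact haS'
  by_cases hxb : x = b
  · subst hxb; exact hbS'
  have hax : a.val < x.val :=
    lt_of_le_of_ne (haminv x hx) (fun h => hxa (Fin.ext h.symm))
  have hxbv : x.val < b.val :=
    lt_of_le_of_ne (hbmaxv x hx) (fun h => hxb (Fin.ext h))
  -- S = {a, x, b}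
  have hSeq : S = {a, x, b} := by
    symm
    apply Finset.eq_of_subset_of_card_le
    · intro y hy
      simp only [Finset.mem_insert, Finset.mem_singleton] at hy
      rcases hy with rfl | rfl | rfl <;> assumption
    · have hc : ({a, x, b} : Finset (Fin (n ^ 2))).card = 3 := by
        rw [Finset.card_insert_of_notMem, Finset.card_insert_of_notMem,
          Finset.card_singleton]
        · simp only [Finset.mem_singleton]
          exact fun h => hxb h
        · simp only [Finset.mem_insert, Finset.mem_singleton]
          push_neg
          exact ⟨fun h => hxa h.symm, fun h => by rw [h] at hax; omega⟩
      rw [hc]; exact hS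
  have hmemS : ∀ y ∈ S, y = a ∨ y = x ∨ y = b := by
    intro y hy
    rw [hSeq] at hy
    simpa using hy
  -- rows agree
  have hRcard : (S.image (rowF n)).card ≤ 3 := le_trans Finset.card_image_le hS
  have hR'card : (S'.image (rowF n)).card ≤ 3 := le_trans Finset.card_image_le hS'
  -- row values of a, x, b
  have hrax : (rowF n a).val ≤ (rowF n x).val := rowF_le_rowF (le_of_lt hax)
  have hrxb : (rowF n x).val ≤ (rowF n b).val := rowF_le_rowF (le_of_lt hxbv)
  by_cases hrab : rowF n a = rowF n b
  · -- all of S and S' lie in the row of a; use the column design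
    have hallS : ∀ y ∈ S, rowF n y = rowF n a := by
      intro y hy
      have h1 := rowF_le_rowF (haminv y hy)
      have h2 := rowF_le_rowF (hbmaxv y hy)
      rw [hrab]
      exact Fin.ext (le_antisymm h2 (hrab ▸ h1))
    have hallS' : ∀ y ∈ S', rowF n y = rowF n a := by
      intro y hy
      have h1 := rowF_le_rowF (haminv' y hy)
      have h2 := rowF_le_rowF (hbmaxv' y hy)
      rw [hrab]
      exact Fin.ext (le_antisymm h2 (hrab ▸ h1))
    have hCsim : ∀ j, outcome (𝒯 j) (S.image (colF n)) = outcome (𝒯 j) (S'.image (colF n)) :=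
      fun j => by rw [simCol _ _ _ hallS, simCol _ _ _ hallS', hL j]
    have hCC : S.image (colF n) = S'.image (colF n) :=
      hfeas (le_trans Finset.card_image_le hS : (S.image (colF n)).card ≤ 3)
        (le_trans Finset.card_image_le hS') (funext hCsim)
    have hcx : colF n x ∈ S'.image (colF n) := by
      rw [← hCC]; exact Finset.mem_image.2 ⟨x, hx, rfl⟩
    obtain ⟨y, hyS', hyx⟩ := Finset.mem_image.1 hcx
    have hrow : rowF n y = rowF n x := by
      rw [hallS' y hyS']
      exact Fin.ext (le_antisymm (hrab ▸ hrxb) hrax).symm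
    have hxy : y = x := by
      apply Fin.ext
      rw [← rowF_mul_add_colF n x, ← rowF_mul_add_colF n y, hyx, hrow]
    rwa [hxy] at hyS'
  · have hrabv : (rowF n a).val < (rowF n b).val :=
      lt_of_le_of_ne (le_trans hrax hrxb) (fun h => hrab (Fin.ext h))
    have hrows : S.image (rowF n) = S'.image (rowF n) := by
      apply hfeas (hRcard : (S.image (rowF n)).card ≤ 3) hR'card
      exact funext fun j => by
        show outcome (𝒯 j) (S.image (rowF n)) = outcome (𝒯 j) (S'.image (rowF n))
        rw [simRow, simRow, hL j]
    by_cases hrxa : rowF n x = rowF n a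
    · -- x lies in the row of a: test E sees it
      have hEx : outcome (tE n) S = some x := by
        apply testOf_out_eq_some (kE_inj n hn0) rfl hx
        intro y hy _
        rcases hmemS y hy with rfl | rfl | rfl
        · -- y = a
          have e1 := rowF_mul_add_colF n y
          have e2 := rowF_mul_add_colF n x
          have hprod : (rowF n x).val * n = (rowF n y).val * n := by rw [hrxa]
          have hcol : (colF n y).val < (colF n x).val := by omega
          simp only [kE]
          omega
        · exact le_refl _
        · -- y = b
          apply le_of_lt
          simp only [kE]
          have h1 : (rowF n x).val < (rowF n y).val := by rw [hrxa]; exact hrabv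
          exact digit_lt h1 (by omega)
      have hEx' : outcome (tE n) S' = some x := by rw [← hE]; exact hEx
      exact (testOf_out_some hEx').1
    by_cases hrxb2 : rowF n x = rowF n b
    · -- x lies in the row of b: test F sees it
      have hFx : outcome (tF n) S = some x := by
        apply testOf_out_eq_some (kF_inj n hn0) rfl hx
        intro y hy _
        rcases hmemS y hy with rfl | rfl | rfl
        · -- y = a
          apply le_of_lt
          simp only [kF]
          have hra := (rowF n y).isLt
          have h1 : n - 1 - (rowF n x).val < n - 1 - (rowF n y).val := by
            have : (rowF n y).val < (rowF n x).val := by rw [hrxb2]; exact hrabv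
            have := (rowF n x).isLt
            omega
          exact digit_lt h1 (colF n x).isLt
        · exact le_refl _
        · -- y = b
          have e1 := rowF_mul_add_colF n y
          have e2 := rowF_mul_add_colF n x
          have hprod : (rowF n x).val * n = (rowF n y).val * n := by rw [hrxb2]
          have hcol : (colF n x).val < (colF n y).val := by omega
          have hprod2 : (n - 1 - (rowF n x).val) * n = (n - 1 - (rowF n y).val) * n := by
            rw [hrxb2]
          simp only [kF]
          omega
      have hFx' : outcome (tF n) S' = some x := by rw [← hF]; exact hFx
      exact (testOf_out_some hFx').1
    · -- the row of x is a "new" row: the lifted row design sees x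
      have hraxv : (rowF n a).val < (rowF n x).val :=
        lt_of_le_of_ne hrax (fun h => hrxa (Fin.ext h.symm))
      have hrxbv : (rowF n x).val < (rowF n b).val :=
        lt_of_le_of_ne hrxb (fun h => hrxb2 (Fin.ext h))
      set R₂ : Finset (Fin n) := ({a, b} : Finset (Fin (n ^ 2))).image (rowF n) with hR₂
      have hR₂card : R₂.card ≤ 3 := by
        apply le_trans Finset.card_image_le
        apply le_trans (Finset.card_insert_le _ _)
        simp
      have hrxR2 : rowF n x ∉ R₂ := by
        rw [hR₂]
        simp only [Finset.mem_image, Finset.mem_insert, Finset.mem_singleton]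
        rintro ⟨y, (rfl | rfl), hyx⟩
        · exact hrxa hyx.symm
        · exact hrxb2 hyx.symm
      have hne : S.image (rowF n) ≠ R₂ := fun hEq =>
        hrxR2 (hEq ▸ Finset.mem_image.2 ⟨x, hx, rfl⟩)
      obtain ⟨j, hj⟩ : ∃ j, outcome (𝒯 j) (S.image (rowF n)) ≠ outcome (𝒯 j) R₂ := by
        by_contra hcon
        push_neg at hcon
        exact hne (hfeas (hRcard : (S.image (rowF n)).card ≤ 3) hR₂card (funext hcon))
      have hsub : R₂ ⊆ S.image (rowF n) := by
        apply Finset.image_subset_image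
        intro y hy
        simp only [Finset.mem_insert, Finset.mem_singleton] at hy
        rcases hy with rfl | rfl <;> assumption
      cases ho : outcome (𝒯 j) (S.image (rowF n)) with
      | none =>
        exfalso
        apply hj
        rw [ho]
        symm
        rw [outcome_eq_none_iff]
        intro r hrt hrR2
        exact ((outcome_eq_none_iff _ _).1 ho) r hrt (hsub hrR2)
      | some r =>
        obtain ⟨hrt, hrR, hrmin⟩ := outcome_eq_some ho
        have hrR2 : r ∉ R₂ := by
          intro hmem
          apply hj
          rw [ho]
          symm
          exact outcome_eq_some_of hrt hmem (fun r' hr't hr'R2 => hrmin r' hr't (hsub hr'R2))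
        obtain ⟨y, hyS, rfl⟩ := Finset.mem_image.1 hrR
        have hyx : rowF n y = rowF n x := by
          rcases hmemS y hyS with rfl | rfl | rfl
          · exact absurd (Finset.mem_image.2 ⟨y, by simp, rfl⟩) hrR2
          · rfl
          · exact absurd (Finset.mem_image.2 ⟨y, by simp, rfl⟩) hrR2
        have hsim := simRow (𝒯 j) S
        rw [ho] at hsim
        cases hlo : outcome (liftT n (𝒯 j)) S with
        | none => rw [hlo] at hsim; simp at hsim
        | some z =>
          rw [hlo] at hsim
          by_cases hzt : rowF n z ∈ (𝒯 j)
          · rw [Option.bind_some, if_pos hzt] at hsim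
            have hz : rowF n y = rowF n z := by injection hsim
            obtain ⟨hzS, -, -⟩ := testOf_out_some hlo
            have hzx : z = x := by
              rcases hmemS z hzS with rfl | rfl | rfl
              · exact absurd (hyx.symm.trans hz) hrxa
              · rfl
              · exact absurd (hyx.symm.trans hz) hrxb2
            subst hzx
            have hlo' : outcome (liftT n (𝒯 j)) S' = some z := by rw [← hL j]; exact hlo
            exact (testOf_out_some hlo').1
          · rw [Option.bind_some, if_neg hzt] at hsim
            simp at hsim

def design (n : ℕ) {T₀ : ℕ} (𝒯 : Fin T₀ → List (Fin n)) : Fin (T₀ + 4) → List (Fin (n ^ 2)) :=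
  fun i => if h : (i : ℕ) < T₀ then liftT n (𝒯 ⟨i, h⟩)
    else if (i : ℕ) = T₀ then tA n
    else if (i : ℕ) = T₀ + 1 then tB n
    else if (i : ℕ) = T₀ + 2 then tE n
    else tF n

lemma design_lt {n T₀ : ℕ} (𝒯 : Fin T₀ → List (Fin n)) (j : Fin T₀) :
    design n 𝒯 ⟨j.val, by omega⟩ = liftT n (𝒯 j) := by
  simp [design]

lemma design_A {n T₀ : ℕ} (𝒯 : Fin T₀ → List (Fin n)) :
    design n 𝒯 ⟨T₀, by omega⟩ = tA n := by
  simp [design]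

lemma design_B {n T₀ : ℕ} (𝒯 : Fin T₀ → List (Fin n)) :
    design n 𝒯 ⟨T₀ + 1, by omega⟩ = tB n := by
  have h1 : ¬(T₀ + 1 < T₀) := by omega
  have h2 : ¬(T₀ + 1 = T₀) := by omega
  simp [design, h1, h2]

lemma design_E {n T₀ : ℕ} (𝒯 : Fin T₀ → List (Fin n)) :
    design n 𝒯 ⟨T₀ + 2, by omega⟩ = tE n := by
  have h1 : ¬(T₀ + 2 < T₀) := by omega
  have h2 : ¬(T₀ + 2 = T₀) := by omega
  have h3 : ¬(T₀ + 2 = T₀ + 1) := by omega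
  simp [design, h1, h2, h3]

lemma design_F {n T₀ : ℕ} (𝒯 : Fin T₀ → List (Fin n)) :
    design n 𝒯 ⟨T₀ + 3, by omega⟩ = tF n := by
  have h1 : ¬(T₀ + 3 < T₀) := by omega
  have h2 : ¬(T₀ + 3 = T₀) := by omega
  have h3 : ¬(T₀ + 3 = T₀ + 1) := by omega
  have h4 : ¬(T₀ + 3 = T₀ + 2) := by omega
  simp [design, h1, h2, h3, h4]

lemma design_nodup {n T₀ : ℕ} (𝒯 : Fin T₀ → List (Fin n)) (i : Fin (T₀ + 4)) :
    (design n 𝒯 i).Nodup := by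
  unfold design
  split
  · exact nodup_testOf _ _
  · split
    · exact nodup_testOf _ _
    · split
      · exact nodup_testOf _ _
      · split
        · exact nodup_testOf _ _
        · exact nodup_testOf _ _

end GT

theorem stmt15 (n : ℕ) (hn : 3 ≤ n) : TNK (n ^ 2) 3 ≤ TNK n 3 + 4 := by
  have hn0 : 0 < n := by omega
  have hne : {T : ℕ | ∃ 𝒯 : Fin T → List (Fin n),
      (∀ i, (𝒯 i).Nodup) ∧ Feasible n 3 𝒯}.Nonempty := by
    refine ⟨n, fun i => [i], fun i => List.nodup_singleton _, ?_⟩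
    intro S hS S' hS' h
    ext y
    constructor
    · intro h1
      by_contra h2
      have hy := congrFun h y
      simp [outcome, h1, h2] at hy
    · intro h2
      by_contra h1
      have hy := congrFun h y
      simp [outcome, h1, h2] at hy
  have hmem : TNK n 3 ∈ {T : ℕ | ∃ 𝒯 : Fin T → List (Fin n),
      (∀ i, (𝒯 i).Nodup) ∧ Feasible n 3 𝒯} := Nat.sInf_mem hne
  obtain ⟨𝒯, hnod, hfeas⟩ := hmem
  apply Nat.sInf_le
  refine ⟨GT.design n 𝒯, GT.design_nodup 𝒯, ?_⟩
  intro S hS S' hS' h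
  have hS3 : S.card ≤ 3 := hS
  have hS'3 : S'.card ≤ 3 := hS'
  have hh : ∀ i, outcome (GT.design n 𝒯 i) S = outcome (GT.design n 𝒯 i) S' :=
    fun i => congrFun h i
  have hA := hh ⟨TNK n 3, by omega⟩
  rw [GT.design_A] at hA
  have hB := hh ⟨TNK n 3 + 1, by omega⟩
  rw [GT.design_B] at hB
  have hE := hh ⟨TNK n 3 + 2, by omega⟩
  rw [GT.design_E] at hE
  have hF := hh ⟨TNK n 3 + 3, by omega⟩
  rw [GT.design_F] at hF
  have hL : ∀ j : Fin (TNK n 3),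
      outcome (GT.liftT n (𝒯 j)) S = outcome (GT.liftT n (𝒯 j)) S' := by
    intro j
    have hj := hh ⟨j.val, by omega⟩
    rwa [GT.design_lt] at hj
  exact Finset.Subset.antisymm
    (GT.key_subset n hn 𝒯 hfeas S S' hS3 hS'3 hA hB hE hF hL)
    (GT.key_subset n hn 𝒯 hfeas S' S hS'3 hS3 hA.symm hB.symm hE.symm hF.symm
      (fun j => (hL j).symm))
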